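/- Let D be a dendrite whose metric d satisfies ℋ¹_d(D) < ∞ (D has finite length), let f : D → D be continuous, and let E ⊆ D be a connected set with limsup_{n→∞} diam fⁿ(E) > 0. Then: (1) there exists a least nonnegative integer n₀ such that f^{n₀}(E) ∩ f^{n₀+k}(E) ≠ ∅ for some positive integer k; (2) for any such positive integer k, the sets K_i = ⋃_{j=0}^{∞} f^{n₀+i+jk}(E) for i ∈ {0,1,…,k−1} are connected subsets of D with f(K_i) = K_{i+1} for i ≤ k−2 and f(K_{k−1}) ⊆ K₀; (3) the orbit Orb_f(f^{n₀}(E)) = ⋃_{n≥0} fⁿ(f^{n₀}(E)) has connected components L₀ (containing K₀ and f^{n₀}(E)), L₁, …, L_{r−1}, where r divides k, f(L_j) = L_{j+1} for j ≤ r−2, f(L_{r−1}) ⊆ L₀, and L_j = ⋃_{ℓ=0}^{k/r−1} K_{j+ℓr} for every j; (4) Orb_f(E) = E ⊔ f(E) ⊔ … ⊔ f^{n₀−1}(E) ⊔ L₀ ⊔ L₁ ⊔ … ⊔ L_{r−1}, a disjoint union. -/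

import Mathlib

open Metric Set Filter Topology

/-- A set homeomorphic to the circle. -/
def IsCircleSet {X : Type*} [TopologicalSpace X] (S : Set X) : Prop :=
  Nonempty (S ≃ₜ AddCircle (1 : ℝ))

/-- The (ambient) space `X` is a dendrite: a nonempty compact connected locally connected
metric space containing no subset homeomorphic to a circle. -/
structure IsDendrite (X : Type*) [MetricSpace X] : Prop where
  compact : CompactSpace X
  connected : ConnectedSpace X
  locallyConnected : LocallyConnectedSpace X
  noCircle : ∀ S : Set X, ¬ IsCircleSet S

/-- The set of connected components of the subset `F` (as subsets of the ambient space). -/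
def componentsIn {X : Type*} [TopologicalSpace X] (F : Set X) : Set (Set X) :=
  {C | ∃ y ∈ F, C = connectedComponentIn F y}

/-- `x` has finite order: `X \ {x}` has finitely many connected components. -/
def HasFiniteOrder {X : Type*} [TopologicalSpace X] (x : X) : Prop :=
  (componentsIn ({x}ᶜ : Set X)).Finite

/-- `x` is an endpoint of the space: `X \ {x}` has exactly one connected component. -/
def IsEndpoint {X : Type*} [TopologicalSpace X] (x : X) : Prop :=
  ∃! C, C ∈ componentsIn ({x}ᶜ : Set X)

/-- `x` is an endpoint of the subset `S`: `S \ {x}` has exactly one connected component. -/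
def IsEndpointOf {X : Type*} [TopologicalSpace X] (S : Set X) (x : X) : Prop :=
  ∃! C, C ∈ componentsIn (S \ {x})

/-- `x` is a cutpoint of the space: `X \ {x}` has at least two connected components. -/
def IsCutpoint {X : Type*} [TopologicalSpace X] (x : X) : Prop :=
  ∃ C₁ ∈ componentsIn ({x}ᶜ : Set X), ∃ C₂ ∈ componentsIn ({x}ᶜ : Set X), C₁ ≠ C₂

/-- The set of branch points: points of order at least 3. -/
def branchPoints (X : Type*) [TopologicalSpace X] : Set X :=
  {x | ∃ C₁ ∈ componentsIn ({x}ᶜ : Set X), ∃ C₂ ∈ componentsIn ({x}ᶜ : Set X),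
       ∃ C₃ ∈ componentsIn ({x}ᶜ : Set X), C₁ ≠ C₂ ∧ C₁ ≠ C₃ ∧ C₂ ≠ C₃}

/-- A subdendrite: a nonempty closed connected subset. -/
def IsSubdendrite {X : Type*} [TopologicalSpace X] (S : Set X) : Prop :=
  IsClosed S ∧ IsConnected S

/-- The space is completely regular (as a continuum): every nondegenerate subcontinuum
has nonempty interior. -/
def IsCompletelyRegularContinuum (X : Type*) [TopologicalSpace X] : Prop :=
  ∀ S : Set X, IsClosed S → IsConnected S → S.Nontrivial → (interior S).Nonempty

/-- `(x, y)` is a scrambled (Li–Yorke) pair for `f`. -/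
def IsScrambledPair {X : Type*} [MetricSpace X] (f : X → X) (x y : X) : Prop :=
  Filter.atTop.liminf (fun n : ℕ => dist (f^[n] x) (f^[n] y)) = 0 ∧
  0 < Filter.atTop.limsup (fun n : ℕ => dist (f^[n] x) (f^[n] y))

/-- `(x, y)` is an `ε`-scrambled pair for `f`. -/
def IsEpsScrambledPair {X : Type*} [MetricSpace X] (f : X → X) (ε : ℝ) (x y : X) : Prop :=
  Filter.atTop.liminf (fun n : ℕ => dist (f^[n] x) (f^[n] y)) = 0 ∧
  ε < Filter.atTop.limsup (fun n : ℕ => dist (f^[n] x) (f^[n] y))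

/-- `f` is generically chaotic: the set of scrambled pairs is residual in `X × X`. -/
def GenericallyChaotic {X : Type*} [MetricSpace X] (f : X → X) : Prop :=
  {p : X × X | IsScrambledPair f p.1 p.2} ∈ residual (X × X)

/-- `f` is generically `ε`-chaotic: the set of `ε`-scrambled pairs is residual in `X × X`. -/
def GenericallyEpsChaotic {X : Type*} [MetricSpace X] (f : X → X) (ε : ℝ) : Prop :=
  {p : X × X | IsEpsScrambledPair f ε p.1 p.2} ∈ residual (X × X)

/-- Distance between two sets: `inf {d(a,b) : a ∈ A, b ∈ B}`. -/
noncomputable def setDist {X : Type*} [MetricSpace X] (A B : Set X) : ℝ :=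
  sInf (Set.image2 dist A B)

/-- Condition (Prox) for a family of subsets. -/
def ProxFamily {X : Type*} [MetricSpace X] (f : X → X) (𝒮 : Set (Set X)) : Prop :=
  ∀ S₁ ∈ 𝒮, ∀ S₂ ∈ 𝒮,
    Filter.atTop.liminf (fun n : ℕ => setDist ((f^[n]) '' S₁) ((f^[n]) '' S₂)) = 0

/-- Condition (Sens) with constant `η` for a family of subsets. -/
def SensFamily {X : Type*} [MetricSpace X] (f : X → X) (𝒮 : Set (Set X)) (η : ℝ) : Prop :=
  ∀ S ∈ 𝒮, η < Filter.atTop.limsup (fun n : ℕ => Metric.diam ((f^[n]) '' S))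

/-- An arc: a set homeomorphic to `[0,1]`. -/
def IsArc {X : Type*} [TopologicalSpace X] (A : Set X) : Prop :=
  Nonempty ((Set.Icc (0:ℝ) 1) ≃ₜ A)

/-- A free arc: an arc which, with its two endpoints removed, is open in the ambient space. -/
def IsFreeArc {X : Type*} [TopologicalSpace X] (A : Set X) : Prop :=
  ∃ φ : (Set.Icc (0:ℝ) 1) ≃ₜ A,
    IsOpen (A \ {(φ ⟨0, Set.left_mem_Icc.mpr zero_le_one⟩).1,
                 (φ ⟨1, Set.right_mem_Icc.mpr zero_le_one⟩).1})

/-- The family of all open balls of positive radius. -/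
def openBallFamily (X : Type*) [MetricSpace X] : Set (Set X) :=
  {B | ∃ x : X, ∃ r : ℝ, 0 < r ∧ B = Metric.ball x r}

/-- The family of all free arcs. -/
def freeArcFamily (X : Type*) [TopologicalSpace X] : Set (Set X) :=
  {A | IsFreeArc A}

/-- The family of all nondegenerate subdendrites. -/
def subdendriteFamily (X : Type*) [TopologicalSpace X] : Set (Set X) :=
  {S | IsSubdendrite S ∧ S.Nontrivial}

/-- In a uniquely arcwise connected space (such as a dendrite), the arc `[x,y]` coincides with
the intersection of all connected sets containing both `x` and `y`. -/
def dendArc {X : Type*} [TopologicalSpace X] (x y : X) : Set X :=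
  ⋂₀ {C : Set X | IsPreconnected C ∧ x ∈ C ∧ y ∈ C}

/-- `D^a(x) = {y : x ∈ [a,y]}`. -/
def Dup {X : Type*} [TopologicalSpace X] (a x : X) : Set X :=
  {y | x ∈ dendArc a y}

/-- `D_{[a,b]}`: the closure of `D \ (D^b(a) ∪ D^a(b))`. -/
def Dab {X : Type*} [TopologicalSpace X] (a b : X) : Set X :=
  closure (Set.univ \ (Dup b a ∪ Dup a b))

/-- `x` admires `a`: `f(x) ∈ D_{[a,x)}`, i.e. `f(x) ∈ D_{[a,x]}` and `f(x) ≠ x`. -/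
def Admires {X : Type*} [TopologicalSpace X] (f : X → X) (a x : X) : Prop :=
  f x ∈ Dab a x ∧ f x ≠ x

/-- `x` evades `a`: `f(x) ∈ D^a(x) \ {x}`. -/
def Evades {X : Type*} [TopologicalSpace X] (f : X → X) (a x : X) : Prop :=
  f x ∈ Dup a x ∧ f x ≠ x

/-- The orbit of a set under `f`. -/
def orbitSet {X : Type*} (f : X → X) (A : Set X) : Set X :=
  ⋃ n : ℕ, (f^[n]) '' A

/-- `f` is exact (locally eventually onto). -/
def IsExactMap {X : Type*} [TopologicalSpace X] (f : X → X) : Prop :=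
  Continuous f ∧ ∀ U : Set X, IsOpen U → U.Nonempty → ∃ n : ℕ, 0 < n ∧ (f^[n]) '' U = Set.univ

/-- The Riemann (Thomae) function: `0` at irrationals, `1/q` at a rational with
reduced denominator `q`. -/
noncomputable def riemannFn (x : ℝ) : ℝ :=
  open scoped Classical in
  if h : ∃ q : ℚ, (q : ℝ) = x then 1 / ((h.choose.den : ℕ) : ℝ) else 0

/-- The Riemann dendrite: the subgraph of the Riemann function over `[0,1]`. -/
def RiemannDendrite : Set (ℝ × ℝ) :=
  {p | p.1 ∈ Set.Icc (0:ℝ) 1 ∧ p.2 ∈ Set.Icc (0:ℝ) (riemannFn p.1)}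

/-- `a` is a weakly repelling fixed point of `f` for the component `B`. -/
def WeaklyRepellingFor {X : Type*} [MetricSpace X] (f : X → X) (a : X) (B : Set X) : Prop :=
  (∀ ε > (0:ℝ), ∃ x ∈ B, dist x a < ε ∧ IsCutpoint x ∧ f x = x) ∨
  (∀ ε > (0:ℝ), ∃ x ∈ B, dist x a < ε ∧ IsCutpoint x ∧ Evades f a x)
section AuxOrbitHelpers
open MeasureTheory
open scoped ENNReal NNReal

-- images of iterates compose
theorem iter_image {D : Type*} (f : D → D) (a b : ℕ) (E : Set D) :
    (f^[a]) '' ((f^[b]) '' E) = (f^[a + b]) '' E := by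
  rw [← Set.image_comp, ← Function.iterate_add]

theorem key_finite {D : Type*} [MetricSpace D] [MeasurableSpace D] [BorelSpace D]
    [CompactSpace D] [Nonempty D]
    (hlen : MeasureTheory.Measure.hausdorffMeasure 1 (Set.univ : Set D) < ⊤)
    (S : ℕ → Set D) (hconn : ∀ n, IsPreconnected (S n))
    (hdisj : ∀ m n, m ≠ n → S m ∩ S n = ∅)
    {δ : ℝ} (hδ : 0 < δ) (hI : {n | δ < Metric.diam (S n)}.Infinite) : False := by
  classical
  set μ : Measure D := MeasureTheory.Measure.hausdorffMeasure 1 with hμ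
  -- pick two far-apart points in each big S n
  have hab : ∀ n ∈ {n | δ < Metric.diam (S n)}, ∃ a ∈ S n, ∃ b ∈ S n, δ < dist a b := by
    intro n hn
    by_contra hcon
    push_neg at hcon
    have : Metric.diam (S n) ≤ δ := Metric.diam_le_of_forall_dist_le hδ.le
      (fun a ha b hb => hcon a ha b hb)
    exact absurd hn (by simp [not_lt, this])
  choose! a ha b hb hd using hab
  -- finite subcover by small balls
  have hcov : (Set.univ : Set D) ⊆ ⋃ y : D, Metric.ball y (δ/16) := by
    intro x _
    exact Set.mem_iUnion.2 ⟨x, Metric.mem_ball_self (by linarith)⟩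
  obtain ⟨t, ht⟩ := isCompact_univ.elim_finite_subcover (fun y : D => Metric.ball y (δ/16))
    (fun y => Metric.isOpen_ball) hcov
  -- pigeonhole: one ball receives infinitely many a n
  have : ∃ y ∈ t, {n ∈ {n | δ < Metric.diam (S n)} | a n ∈ Metric.ball y (δ/16)}.Infinite := by
    by_contra hcon
    push_neg at hcon
    have : {n | δ < Metric.diam (S n)} ⊆
        ⋃ y ∈ t, {n ∈ {n | δ < Metric.diam (S n)} | a n ∈ Metric.ball y (δ/16)} := by
      intro n hn
      have := ht (Set.mem_univ (a n))
      simp only [Set.mem_iUnion] at this ⊢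
      obtain ⟨y, hy, hmem⟩ := this
      exact ⟨y, hy, hn, hmem⟩
    exact (((t.finite_toSet).biUnion (fun y hy => hcon y hy)).subset this).not_infinite hI
  obtain ⟨y, -, hIy⟩ := this
  set I' : Set ℕ := {n ∈ {n | δ < Metric.diam (S n)} | a n ∈ Metric.ball y (δ/16)} with hI'def
  set u : ℝ := δ/8 with hu
  set v : ℝ := δ/2 with hv
  set g : D → ℝ := fun p => dist y p with hgdef
  have hg : Continuous g := continuous_const.dist continuous_id
  have hfib : ∀ n ∈ I', ∀ s ∈ Set.Icc u v, ∃ p ∈ S n, g p = s := by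
    intro n hn s hs
    obtain ⟨hn1, hn2⟩ := hn
    have ha' := ha n hn1
    have hb' := hb n hn1
    have hd' := hd n hn1
    have hball : dist (a n) y < δ/16 := Metric.mem_ball.1 hn2
    have h1 : g (a n) ≤ u := by
      simp only [hgdef, hu]
      rw [dist_comm]
      linarith
    have h2 : v ≤ g (b n) := by
      have htri := dist_triangle (a n) y (b n)
      have : dist y (b n) ≥ dist (a n) (b n) - dist (a n) y := by linarith
      simp only [hgdef, hv]
      linarith
    have hsub : s ∈ Set.Icc (g (a n)) (g (b n)) := ⟨le_trans h1 hs.1, le_trans hs.2 h2⟩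
    obtain ⟨p, hp, hgp⟩ := (hconn n).intermediate_value ha' hb' hg.continuousOn hsub
    exact ⟨p, hp, hgp⟩
  -- choose N
  have hvu : (0:ℝ) < v - u := by rw [hu, hv]; linarith
  set c : ℝ≥0∞ := ENNReal.ofReal (v - u) / 2 with hc
  have hc0 : c ≠ 0 := by
    simp only [hc]
    refine (ENNReal.div_pos (by simpa using hvu) (by norm_num)).ne'
  have hctop : c ≠ ⊤ := by
    simp only [hc]
    exact (ENNReal.div_lt_top ENNReal.ofReal_ne_top (by norm_num)).ne
  set CC : ℝ≥0∞ := 2 * (μ Set.univ + 1) with hCC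
  have hCCtop : CC ≠ ⊤ := by
    simp only [hCC]
    exact ENNReal.mul_ne_top (by norm_num) (ENNReal.add_ne_top.2 ⟨hlen.ne, by norm_num⟩)
  obtain ⟨N, hN⟩ := ENNReal.exists_nat_gt (show CC / c ≠ ⊤ from
    (ENNReal.div_lt_top hCCtop hc0).ne)
  -- embedding of ℕ into I'
  set en : ℕ ↪ I' := hIy.natEmbedding with hen
  set nn : Fin N → ℕ := fun i => ((en (i : ℕ)) : ℕ) with hnn
  have hnnI : ∀ i, nn i ∈ I' := fun i => (en (i : ℕ)).2
  have hnninj : Function.Injective nn := by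
    intro i j h
    have h3 : (i : ℕ) = (j : ℕ) := en.injective (Subtype.ext h)
    exact Fin.ext h3
  -- choose fiber points
  have hfib' : ∀ (i : Fin N), ∀ s ∈ Set.Icc u v, ∃ p ∈ S (nn i), g p = s :=
    fun i => hfib (nn i) (hnnI i)
  choose! p hpS hpg using hfib'
  have hpne : ∀ s ∈ Set.Icc u v, ∀ i i' : Fin N, i ≠ i' → 0 < dist (p i s) (p i' s) := by
    intro s hs i i' hii
    rw [dist_pos]
    intro heq
    have h1 := hpS i s hs
    have h2 := hpS i' s hs
    rw [heq] at h1
    have : p i' s ∈ S (nn i) ∩ S (nn i') := ⟨h1, h2⟩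
    rw [hdisj (nn i) (nn i') (fun hc => hii (hnninj hc))] at this
    exact this
  -- the sets A j
  set A : ℕ → Set ℝ := fun j =>
    {s ∈ Set.Icc u v | ∀ i i' : Fin N, i ≠ i' → 1/(j+1 : ℝ) < dist (p i s) (p i' s)} with hA
  have hAmono : Monotone A := by
    intro j j' hjj s hsmem
    refine ⟨hsmem.1, fun i i' hii => lt_of_le_of_lt ?_ (hsmem.2 i i' hii)⟩
    apply one_div_le_one_div_of_le
    · positivity
    · exact_mod_cast by exact_mod_cast Nat.add_le_add_right hjj 1
  have hAsub : ∀ j, A j ⊆ Set.Icc u v := fun j s hs => hs.1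
  have hAcover : Set.Icc u v ⊆ ⋃ j, A j := by
    intro s hs
    by_cases hne : ((Finset.univ : Finset (Fin N × Fin N)).filter (fun q => q.1 ≠ q.2)).Nonempty
    · obtain ⟨q0, hq0mem, hq0min⟩ := Finset.exists_min_image _
        (fun q : Fin N × Fin N => dist (p q.1 s) (p q.2 s)) hne
      have hq0ne : q0.1 ≠ q0.2 := (Finset.mem_filter.1 hq0mem).2
      have hq0pos : 0 < dist (p q0.1 s) (p q0.2 s) := hpne s hs q0.1 q0.2 hq0ne
      obtain ⟨j, hj⟩ := exists_nat_one_div_lt hq0pos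
      refine Set.mem_iUnion.2 ⟨j, hs, fun i i' hii => ?_⟩
      calc 1/(j+1:ℝ) < dist (p q0.1 s) (p q0.2 s) := hj
      _ ≤ dist (p i s) (p i' s) := hq0min (i, i')
          (Finset.mem_filter.2 ⟨Finset.mem_univ _, hii⟩)
    · refine Set.mem_iUnion.2 ⟨0, hs, fun i i' hii => absurd ?_ (Finset.not_nonempty_iff_eq_empty.1 hne ▸ Finset.notMem_empty (i, i'))⟩
      exact Finset.mem_filter.2 ⟨Finset.mem_univ _, hii⟩
  have hAU : (⋃ j, A j) = Set.Icc u v := le_antisymm (Set.iUnion_subset hAsub) hAcover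
  have hvol : (volume (Set.Icc u v) : ℝ≥0∞) = ⨆ j, volume (A j) := by
    rw [← hAU]
    exact hAmono.measure_iUnion
  have hcA : ∃ j, c < volume (A j) := by
    rw [← lt_iSup_iff, ← hvol, Real.volume_Icc]
    refine lt_of_lt_of_le (ENNReal.half_lt_self (by simpa using hvu) ENNReal.ofReal_ne_top) le_rfl
  obtain ⟨j, hjA⟩ := hcA
  -- extract a cover at small scale
  set r : ℝ≥0∞ := ENNReal.ofReal (1/(j+1:ℝ)) / 2 with hr
  have hrpos : 0 < r := by
    rw [hr]
    refine ENNReal.div_pos ?_ (by norm_num)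
    simp only [ne_eq, ENNReal.ofReal_eq_zero, not_le]
    positivity
  have hrtop : r < ⊤ := by
    rw [hr]
    exact ENNReal.div_lt_top ENNReal.ofReal_ne_top (by norm_num)
  have hcovex : ∃ U : ℕ → Set D, (Set.univ : Set D) ⊆ ⋃ l, U l ∧
      (∀ l, EMetric.diam (U l) ≤ r) ∧ ∑' l, EMetric.diam (U l) ≤ μ Set.univ + 1 := by
    have happ := MeasureTheory.Measure.hausdorffMeasure_apply 1 (Set.univ : Set D)
    have hle : (⨅ (t : ℕ → Set D) (_ : (Set.univ : Set D) ⊆ ⋃ n', t n')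
        (_ : ∀ n', EMetric.diam (t n') ≤ r),
        ∑' n', ⨆ _ : (t n').Nonempty, EMetric.diam (t n') ^ (1:ℝ)) ≤ μ Set.univ := by
      rw [hμ, happ]
      exact le_iSup₂ (f := fun (r' : ℝ≥0∞) (_ : 0 < r') =>
        ⨅ (t : ℕ → Set D) (_ : (Set.univ : Set D) ⊆ ⋃ n', t n')
        (_ : ∀ n', EMetric.diam (t n') ≤ r'),
        ∑' n', ⨆ _ : (t n').Nonempty, EMetric.diam (t n') ^ (1:ℝ)) r hrpos
    have hlt : (⨅ (t : ℕ → Set D) (_ : (Set.univ : Set D) ⊆ ⋃ n', t n')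
        (_ : ∀ n', EMetric.diam (t n') ≤ r),
        ∑' n', ⨆ _ : (t n').Nonempty, EMetric.diam (t n') ^ (1:ℝ)) < μ Set.univ + 1 :=
      lt_of_le_of_lt hle (ENNReal.lt_add_right hlen.ne one_ne_zero)
    rw [iInf_lt_iff] at hlt
    obtain ⟨U, hU⟩ := hlt
    rw [iInf_lt_iff] at hU
    obtain ⟨hU1, hU⟩ := hU
    rw [iInf_lt_iff] at hU
    obtain ⟨hU2, hU⟩ := hU
    refine ⟨U, hU1, hU2, le_trans (le_of_eq ?_) hU.le⟩
    refine tsum_congr fun l => ?_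
    by_cases hne : (U l).Nonempty
    · rw [iSup_pos hne, ENNReal.rpow_one]
    · rw [Set.not_nonempty_iff_eq_empty.1 hne]
      simp
      exact Metric.ediam_empty
  obtain ⟨U, hUcov, hUdiam, hUsum⟩ := hcovex
  have hUtop : ∀ l, EMetric.diam (U l) ≠ ⊤ := fun l => (lt_of_le_of_lt (hUdiam l) hrtop).ne
  set dl : ℕ → ℝ := fun l => (EMetric.diam (U l)).toReal with hdl
  have hdl0 : ∀ l, 0 ≤ dl l := fun l => ENNReal.toReal_nonneg
  set yl : ℕ → D := fun l => if h : (U l).Nonempty then h.some else Classical.arbitrary D with hyl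
  set J : ℕ → Set ℝ := fun l =>
    if (U l).Nonempty then Set.Icc (g (yl l) - dl l) (g (yl l) + dl l) else ∅ with hJ
  have hJmeas : ∀ l, MeasurableSet (J l) := by
    intro l
    by_cases hne : (U l).Nonempty
    · simp only [hJ, if_pos hne]; exact measurableSet_Icc
    · simp only [hJ, if_neg hne]; exact MeasurableSet.empty
  set Φ : ℝ → ℝ≥0∞ := fun s => ∑' l, (J l).indicator (fun _ => (1:ℝ≥0∞)) s with hΦ
  have hΦmeas : Measurable Φ :=
    Measurable.ennreal_tsum (fun l => measurable_const.indicator (hJmeas l))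
  have hlint : ∫⁻ s, Φ s = ∑' l, volume (J l) := by
    rw [hΦ]
    rw [MeasureTheory.lintegral_tsum (fun l => (measurable_const.indicator (hJmeas l)).aemeasurable)]
    refine tsum_congr fun l => ?_
    rw [MeasureTheory.lintegral_indicator (hJmeas l)]
    simp
  have hvolJ : ∀ l, volume (J l) ≤ 2 * EMetric.diam (U l) := by
    intro l
    by_cases hne : (U l).Nonempty
    · simp only [hJ, if_pos hne, Real.volume_Icc]
      have : g (yl l) + dl l - (g (yl l) - dl l) = 2 * dl l := by ring
      rw [this, ENNReal.ofReal_mul (by norm_num)]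
      rw [hdl]
      simp only [ENNReal.ofReal_toReal (hUtop l)]
      gcongr
      norm_num
    · simp only [hJ, if_neg hne]
      simp
  have hsumJ : ∑' l, volume (J l) ≤ CC := by
    calc ∑' l, volume (J l) ≤ ∑' l, 2 * EMetric.diam (U l) := ENNReal.tsum_le_tsum hvolJ
    _ = 2 * ∑' l, EMetric.diam (U l) := ENNReal.tsum_mul_left
    _ ≤ CC := by rw [hCC]; exact mul_le_mul_right hUsum 2
  -- A j ⊆ B
  set B : Set ℝ := {s | (N:ℝ≥0∞) ≤ Φ s} with hB
  have hBmeas : MeasurableSet B := measurableSet_le measurable_const hΦmeas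
  have hAB : A j ⊆ B := by
    intro s hsA
    obtain ⟨hsIcc, hsdist⟩ := hsA
    -- for each i, pick l i with p i s ∈ U (l i)
    have hex : ∀ i : Fin N, ∃ l, p i s ∈ U l := by
      intro i
      have := hUcov (Set.mem_univ (p i s))
      simpa using this
    choose ll hll using hex
    have hllinj : Function.Injective ll := by
      intro i i' hEq
      by_contra hii
      have h1 := hll i
      have h2 := hll i'
      rw [hEq] at h1
      have hdd : dist (p i s) (p i' s) ≤ (1/(j+1:ℝ))/2 := by
        have hedist : edist (p i s) (p i' s) ≤ EMetric.diam (U (ll i')) :=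
          EMetric.edist_le_diam_of_mem h1 h2
        have := le_trans hedist (hUdiam (ll i'))
        rw [hr] at this
        have h3 : edist (p i s) (p i' s) ≤ ENNReal.ofReal ((1/(j+1:ℝ))/2) := by
          have h4 : ENNReal.ofReal ((1/(j+1:ℝ))/2) = ENNReal.ofReal (1/(j+1:ℝ)) / 2 := by
            rw [ENNReal.ofReal_div_of_pos (by norm_num)]
            norm_num
          rw [h4]
          exact this
        rw [edist_dist] at h3
        exact (ENNReal.ofReal_le_ofReal_iff (by positivity)).1 h3
      have := hsdist i i' hii
      have hpos : (0:ℝ) < 1/(j+1:ℝ) := by positivity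
      linarith
    have hsJ : ∀ i : Fin N, s ∈ J (ll i) := by
      intro i
      have hne : (U (ll i)).Nonempty := ⟨p i s, hll i⟩
      simp only [hJ, if_pos hne]
      have hyU : yl (ll i) ∈ U (ll i) := by
        simp only [hyl, dif_pos hne]
        exact hne.some_mem
      have hdistb : dist (p i s) (yl (ll i)) ≤ dl (ll i) := by
        have hedist : edist (p i s) (yl (ll i)) ≤ EMetric.diam (U (ll i)) :=
          EMetric.edist_le_diam_of_mem (hll i) hyU
        rw [edist_dist] at hedist
        have := ENNReal.toReal_mono (hUtop (ll i)) hedist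
        rwa [ENNReal.toReal_ofReal dist_nonneg] at this
      have habs : |g (p i s) - g (yl (ll i))| ≤ dist (p i s) (yl (ll i)) := by
        simp only [hgdef]
        rw [dist_comm y (p i s), dist_comm y (yl (ll i))]
        exact abs_dist_sub_le _ _ _
      have hgp := hpg i s hsIcc
      rw [hgp] at habs
      have := abs_le.1 (le_trans habs hdistb)
      constructor <;> linarith [this.1, this.2]
    -- count
    have hΦge : (N:ℝ≥0∞) ≤ Φ s := by
      have hcard : (Finset.univ.image ll).card = N := by
        rw [Finset.card_image_of_injective _ hllinj, Finset.card_univ, Fintype.card_fin]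
      calc (N:ℝ≥0∞) = ∑ l' ∈ Finset.univ.image ll, 1 := by
            rw [Finset.sum_const, hcard]; simp
      _ ≤ ∑ l' ∈ Finset.univ.image ll, (J l').indicator (fun _ => (1:ℝ≥0∞)) s := by
            refine Finset.sum_le_sum fun l' hl' => ?_
            obtain ⟨i, -, rfl⟩ := Finset.mem_image.1 hl'
            rw [Set.indicator_of_mem (hsJ i)]
      _ ≤ Φ s := ENNReal.sum_le_tsum _
    exact hΦge
  -- final contradiction
  have hfinal : (N:ℝ≥0∞) * c ≤ CC := by
    calc (N:ℝ≥0∞) * c ≤ (N:ℝ≥0∞) * volume (A j) := mul_le_mul_right hjA.le _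
    _ ≤ (N:ℝ≥0∞) * volume B := mul_le_mul_right (measure_mono hAB) _
    _ = ∫⁻ s, B.indicator (fun _ => (N:ℝ≥0∞)) s := by
        rw [MeasureTheory.lintegral_indicator hBmeas]
        simp [mul_comm]
    _ ≤ ∫⁻ s, Φ s := by
        refine MeasureTheory.lintegral_mono fun s => ?_
        by_cases hs : s ∈ B
        · rw [Set.indicator_of_mem hs]; exact hs
        · rw [Set.indicator_of_notMem hs]; exact zero_le
    _ = ∑' l, volume (J l) := hlint
    _ ≤ CC := hsumJ
  have : CC < (N:ℝ≥0∞) * c := by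
    rw [← ENNReal.div_lt_iff (Or.inl hc0) (Or.inl hctop)]
    exact hN
  exact absurd hfinal (not_le.2 this)


end AuxOrbitHelpers

/-- Structure of orbits of connected sets in a dendrite of finite length, for a connected set
whose iterates do not shrink to diameter zero. -/
theorem orbit_structure_finite_length
    (D : Type*) [MetricSpace D] [MeasurableSpace D] [BorelSpace D] (hD : IsDendrite D)
    (hlen : MeasureTheory.Measure.hausdorffMeasure 1 (Set.univ : Set D) < ⊤)
    (f : D → D) (hf : Continuous f)
    {E : Set D} (hE : IsConnected E)
    (hsup : 0 < Filter.atTop.limsup (fun n : ℕ => Metric.diam ((f^[n]) '' E))) :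
    ∃ n₀ : ℕ,
      ((∃ k : ℕ, 0 < k ∧ (((f^[n₀]) '' E) ∩ ((f^[n₀ + k]) '' E)).Nonempty) ∧
       (∀ m < n₀, ¬ ∃ k : ℕ, 0 < k ∧ (((f^[m]) '' E) ∩ ((f^[m + k]) '' E)).Nonempty)) ∧
      ∀ k : ℕ, 0 < k → (((f^[n₀]) '' E) ∩ ((f^[n₀ + k]) '' E)).Nonempty →
        ((∀ i < k, IsConnected (⋃ j : ℕ, (f^[n₀ + i + j * k]) '' E)) ∧
         (∀ i : ℕ, i + 1 < k →
            f '' (⋃ j : ℕ, (f^[n₀ + i + j * k]) '' E)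
              = ⋃ j : ℕ, (f^[n₀ + (i + 1) + j * k]) '' E) ∧
         (f '' (⋃ j : ℕ, (f^[n₀ + (k - 1) + j * k]) '' E)
            ⊆ ⋃ j : ℕ, (f^[n₀ + j * k]) '' E) ∧
         ∃ r : ℕ, 0 < r ∧ r ∣ k ∧ ∃ L : ℕ → Set D,
           (componentsIn (orbitSet f ((f^[n₀]) '' E)) = {C | ∃ j < r, C = L j}) ∧
           (∀ j < r, ∀ j' < r, j ≠ j' → L j ≠ L j') ∧
           ((⋃ j : ℕ, (f^[n₀ + j * k]) '' E) ⊆ L 0) ∧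
           ((f^[n₀]) '' E ⊆ L 0) ∧
           (∀ j : ℕ, j + 1 < r → f '' L j = L (j + 1)) ∧
           (f '' L (r - 1) ⊆ L 0) ∧
           (∀ j < r, L j = ⋃ ℓ ∈ Finset.range (k / r),
              ⋃ m : ℕ, (f^[n₀ + (j + ℓ * r) + m * k]) '' E) ∧
           (orbitSet f E
              = (⋃ m ∈ Finset.range n₀, (f^[m]) '' E) ∪ ⋃ j ∈ Finset.range r, L j) ∧
           (∀ m < n₀, ∀ m' < n₀, m ≠ m' → Disjoint ((f^[m]) '' E) ((f^[m']) '' E)) ∧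
           (∀ m < n₀, ∀ j < r, Disjoint ((f^[m]) '' E) (L j)) ∧
           (∀ j < r, ∀ j' < r, j ≠ j' → Disjoint (L j) (L j'))) := by

  classical
  haveI := hD.compact
  haveI : Nonempty D := ⟨hE.nonempty.some⟩
  -- connectedness of iterates
  have hconn : ∀ n : ℕ, IsConnected ((f^[n]) '' E) :=
    fun n => hE.image _ (hf.iterate n).continuousOn
  -- Step 1: existence of some n with the intersection property
  have hexQ : ∃ n : ℕ, ∃ k : ℕ, 0 < k ∧ (((f^[n]) '' E) ∩ ((f^[n + k]) '' E)).Nonempty := by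
    by_contra hcon
    push_neg at hcon
    have hdisj : ∀ m n : ℕ, m ≠ n → ((f^[m]) '' E) ∩ ((f^[n]) '' E) = ∅ := by
      intro m n hmn
      rcases lt_or_gt_of_ne hmn with h | h
      · have := hcon m (n - m) (by omega)
        have heq : m + (n - m) = n := by omega
        rwa [heq] at this
      · have := hcon n (m - n) (by omega)
        have heq : n + (m - n) = m := by omega
        rw [heq] at this
        rw [Set.inter_comm]
        exact this
    -- get δ and infinitely many large-diameter iterates
    set uu : ℕ → ℝ := fun n => Metric.diam ((f^[n]) '' E) with huu
    have hb : Filter.IsBoundedUnder (· ≥ ·) Filter.atTop uu := by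
      refine ⟨0, ?_⟩
      simp only [Filter.eventually_map]
      exact Filter.Eventually.of_forall fun n => Metric.diam_nonneg
    have hcb : Filter.IsCoboundedUnder (· ≤ ·) Filter.atTop uu :=
      hb.isCoboundedUnder_le
    set δ : ℝ := Filter.atTop.limsup uu / 2 with hδdef
    have hδpos : 0 < δ := by positivity
    have hδlt : δ < Filter.atTop.limsup uu := by
      have := hsup
      rw [hδdef]
      linarith
    have hfreq : ∃ᶠ n in Filter.atTop, δ < uu n :=
      Filter.frequently_lt_of_lt_limsup hcb hδlt
    have hinf : {n : ℕ | δ < Metric.diam ((f^[n]) '' E)}.Infinite :=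
      Nat.frequently_atTop_iff_infinite.1 hfreq
    exact key_finite hlen (fun n => (f^[n]) '' E) (fun n => (hconn n).isPreconnected)
      hdisj hδpos hinf
  set n₀ : ℕ := Nat.find hexQ with hn₀
  refine ⟨n₀, ⟨Nat.find_spec hexQ, fun m hm => Nat.find_min hexQ hm⟩, ?_⟩
  intro k hk hkint
  -- basic machinery
  have hPconn : ∀ m : ℕ, IsConnected ((f^[n₀ + m]) '' E) := fun m => hconn _
  have hEeq : ∀ m m' : ℕ, m = m' → (f^[m]) '' E = (f^[m']) '' E := by
    intro m m' h; rw [h]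
  have hPim : ∀ m : ℕ, f '' ((f^[n₀ + m]) '' E) = (f^[n₀ + (m+1)]) '' E := by
    intro m
    calc f '' ((f^[n₀ + m]) '' E) = (f^[1]) '' ((f^[n₀ + m]) '' E) := by
          rw [Function.iterate_one]
    _ = (f^[1 + (n₀ + m)]) '' E := iter_image f 1 (n₀ + m) E
    _ = (f^[n₀ + (m+1)]) '' E := hEeq _ _ (by omega)
  have hmemiter : ∀ (t m : ℕ) (x : D), x ∈ (f^[m]) '' E → (f^[t]) x ∈ (f^[t + m]) '' E := by
    intro t m x hx
    rw [← iter_image f t m E]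
    exact Set.mem_image_of_mem _ hx
  obtain ⟨x0, hx01, hx02⟩ := hkint
  have hchain : ∀ m : ℕ, (((f^[n₀ + m]) '' E) ∩ ((f^[n₀ + (m + k)]) '' E)).Nonempty := by
    intro m
    refine ⟨(f^[m]) x0, ?_, ?_⟩
    · have := hmemiter m n₀ x0 hx01
      rwa [hEeq (m + n₀) (n₀ + m) (by omega)] at this
    · have := hmemiter m (n₀ + k) x0 hx02
      rwa [hEeq (m + (n₀ + k)) (n₀ + (m + k)) (by omega)] at this
  -- goal (a)
  have goalA : ∀ i : ℕ, IsConnected (⋃ j : ℕ, (f^[n₀ + i + j * k]) '' E) := by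
    intro i
    refine IsConnected.iUnion_of_chain (fun j => hconn _) ?_
    intro j
    show (((f^[n₀ + i + j * k]) '' E) ∩ ((f^[n₀ + i + (j + 1) * k]) '' E)).Nonempty
    obtain ⟨z, hz1, hz2⟩ := hchain (i + j * k)
    refine ⟨z, ?_, ?_⟩
    · rw [hEeq (n₀ + i + j * k) (n₀ + (i + j * k)) (by omega)]
      exact hz1
    · rw [hEeq (n₀ + i + (j + 1) * k) (n₀ + (i + j * k + k)) (by ring)]
      exact hz2
  -- goal (b)
  have goalB : ∀ i : ℕ, f '' (⋃ j : ℕ, (f^[n₀ + i + j * k]) '' E)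
      = ⋃ j : ℕ, (f^[n₀ + (i + 1) + j * k]) '' E := by
    intro i
    rw [Set.image_iUnion]
    refine Set.iUnion_congr fun j => ?_
    calc f '' ((f^[n₀ + i + j * k]) '' E) = (f^[1]) '' ((f^[n₀ + i + j * k]) '' E) := by
          rw [Function.iterate_one]
    _ = (f^[1 + (n₀ + i + j * k)]) '' E := iter_image f 1 _ E
    _ = (f^[n₀ + (i + 1) + j * k]) '' E := hEeq _ _ (by ring)
  -- goal (c)
  have goalC : f '' (⋃ j : ℕ, (f^[n₀ + (k - 1) + j * k]) '' E)
      ⊆ ⋃ j : ℕ, (f^[n₀ + j * k]) '' E := by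
    rw [Set.image_iUnion]
    refine Set.iUnion_subset fun j => ?_
    have hcalc : f '' ((f^[n₀ + (k - 1) + j * k]) '' E) = (f^[n₀ + (j + 1) * k]) '' E := by
      calc f '' ((f^[n₀ + (k - 1) + j * k]) '' E)
          = (f^[1]) '' ((f^[n₀ + (k - 1) + j * k]) '' E) := by rw [Function.iterate_one]
      _ = (f^[1 + (n₀ + (k - 1) + j * k)]) '' E := iter_image f 1 _ E
      _ = (f^[n₀ + (j + 1) * k]) '' E := by
          refine hEeq _ _ ?_
          have h1 : (j + 1) * k = j * k + k := by ring
          omega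
    rw [hcalc]
    exact Set.subset_iUnion (fun j => (f^[n₀ + j * k]) '' E) (j + 1)
  -- the orbit F and components
  set F : Set D := orbitSet f ((f^[n₀]) '' E) with hFdef
  have hFeq : F = ⋃ m : ℕ, (f^[n₀ + m]) '' E := by
    rw [hFdef]
    unfold orbitSet
    refine Set.iUnion_congr fun m => ?_
    rw [iter_image]
    exact hEeq _ _ (by omega)
  have hPF : ∀ m : ℕ, (f^[n₀ + m]) '' E ⊆ F := by
    intro m
    rw [hFeq]
    exact Set.subset_iUnion (fun m => (f^[n₀ + m]) '' E) m
  have hPne : ∀ m : ℕ, ((f^[n₀ + m]) '' E).Nonempty := fun m => (hconn _).nonempty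
  have hfF : ∀ x ∈ F, f x ∈ F := by
    intro x hx
    rw [hFeq] at hx ⊢
    obtain ⟨m, hm⟩ := Set.mem_iUnion.1 hx
    refine Set.mem_iUnion.2 ⟨m + 1, ?_⟩
    rw [← hPim m]
    exact Set.mem_image_of_mem f hm
  set y : ℕ → D := fun m => (hPne m).some with hy
  have hyP : ∀ m, y m ∈ (f^[n₀ + m]) '' E := fun m => (hPne m).some_mem
  have hyF : ∀ m, y m ∈ F := fun m => hPF m (hyP m)
  set L : ℕ → Set D := fun m => connectedComponentIn F (y m) with hLdef
  have hsame : ∀ (m : ℕ) (x : D), x ∈ (f^[n₀ + m]) '' E → connectedComponentIn F x = L m := by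
    intro m x hx
    have hsub : (f^[n₀ + m]) '' E ⊆ connectedComponentIn F x :=
      (hPconn m).isPreconnected.subset_connectedComponentIn hx (hPF m)
    exact connectedComponentIn_eq (hsub (hyP m))
  have hLP : ∀ m : ℕ, (f^[n₀ + m]) '' E ⊆ L m :=
    fun m => (hPconn m).isPreconnected.subset_connectedComponentIn (hyP m) (hPF m)
  have hLconn : ∀ m, IsPreconnected (L m) := fun m => isPreconnected_connectedComponentIn
  have hLF : ∀ m, L m ⊆ F := fun m => connectedComponentIn_subset F (y m)
  have hLmem : ∀ m, y m ∈ L m := fun m => mem_connectedComponentIn (hyF m)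
  have hmemL : ∀ (m : ℕ) (x : D), x ∈ L m → connectedComponentIn F x = L m := by
    intro m x hx
    have : x ∈ connectedComponentIn F (y m) := hx
    have h2 := connectedComponentIn_eq this
    exact h2.symm
  -- image of a component is inside the next component
  have himgsub : ∀ m : ℕ, f '' L m ⊆ L (m + 1) := by
    intro m
    have himg : IsPreconnected (f '' L m) := (hLconn m).image f hf.continuousOn
    have himgF : f '' L m ⊆ F := by
      rintro z ⟨w, hw, rfl⟩
      exact hfF w (hLF m hw)
    have hy1 : f (y m) ∈ f '' L m := Set.mem_image_of_mem f (hLmem m)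
    have hfy : f (y m) ∈ (f^[n₀ + (m + 1)]) '' E := by
      rw [← hPim m]
      exact Set.mem_image_of_mem f (hyP m)
    have := himg.subset_connectedComponentIn hy1 himgF
    rwa [hsame (m + 1) _ hfy] at this
  have hshift : ∀ m m' : ℕ, L m = L m' → L (m + 1) = L (m' + 1) := by
    intro m m' heq
    have hy2 : f (y m') ∈ f '' L m := Set.mem_image_of_mem f (heq ▸ hLmem m')
    have h2 := himgsub m hy2
    have hfy' : f (y m') ∈ (f^[n₀ + (m' + 1)]) '' E := by
      rw [← hPim m']
      exact Set.mem_image_of_mem f (hyP m')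
    have h3 := hsame (m' + 1) _ hfy'
    have h4 := hmemL (m + 1) _ h2
    rw [← h3, h4]
  have hshiftN : ∀ (t m m' : ℕ), L m = L m' → L (m + t) = L (m' + t) := by
    intro t
    induction t with
    | zero => intro m m' h; simpa using h
    | succ t ih =>
        intro m m' h
        have := hshift _ _ (ih m m' h)
        have e1 : m + (t + 1) = m + t + 1 := by omega
        have e2 : m' + (t + 1) = m' + t + 1 := by omega
        rw [e1, e2]
        exact this
  have hperiodk : ∀ m : ℕ, L (m + k) = L m := by
    intro m
    obtain ⟨z, hz1, hz2⟩ := hchain m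
    rw [← hsame m z hz1, ← hsame (m + k) z hz2]
  have hrex : ∃ t : ℕ, 0 < t ∧ L t = L 0 := ⟨k, hk, by simpa using hperiodk 0⟩
  set r : ℕ := Nat.find hrex with hrdef
  obtain ⟨hr0, hrL⟩ : 0 < r ∧ L r = L 0 := Nat.find_spec hrex
  have hrmin : ∀ t, 0 < t → t < r → L t ≠ L 0 := fun t ht1 ht2 h => Nat.find_min hrex ht2 ⟨ht1, h⟩
  have hperiodr : ∀ m : ℕ, L (m + r) = L m := by
    intro m
    have := hshiftN m r 0 hrL
    have e1 : r + m = m + r := by omega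
    have e2 : (0:ℕ) + m = m := by omega
    rw [e1, e2] at this
    exact this
  have hperiodrq : ∀ (q m : ℕ), L (m + q * r) = L m := by
    intro q
    induction q with
    | zero => intro m; simp
    | succ q ih =>
        intro m
        have h1 : m + (q + 1) * r = m + q * r + r := by ring
        rw [h1, hperiodr, ih m]
  have hperiodkq : ∀ (q m : ℕ), L (m + q * k) = L m := by
    intro q
    induction q with
    | zero => intro m; simp
    | succ q ih =>
        intro m
        have h1 : m + (q + 1) * k = m + q * k + k := by ring
        rw [h1, hperiodk, ih m]
  have hdown : ∀ t : ℕ, L t = L 0 → t % r = 0 := by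
    intro t ht
    by_contra hne
    have h1 : t % r < r := Nat.mod_lt t hr0
    have h2 : L (t % r) = L t := by
      have h3 := hperiodrq (t / r) (t % r)
      have h4 : t % r + t / r * r = t := Nat.mod_add_div' t r
      rw [h4] at h3
      exact h3.symm
    exact hrmin (t % r) (Nat.pos_of_ne_zero hne) h1 (h2.trans ht)
  have hmodeq : ∀ m m' : ℕ, m % r = m' % r → L m = L m' := by
    intro m m' h
    have e1 : L m = L (m % r) := by
      have h3 := hperiodrq (m / r) (m % r)
      have h4 : m % r + m / r * r = m := Nat.mod_add_div' m r
      rw [h4] at h3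
      exact h3
    have e2 : L m' = L (m' % r) := by
      have h3 := hperiodrq (m' / r) (m' % r)
      have h4 : m' % r + m' / r * r = m' := Nat.mod_add_div' m' r
      rw [h4] at h3
      exact h3
    rw [e1, e2, h]
  have hmod : ∀ m m' : ℕ, L m = L m' → m % r = m' % r := by
    intro m m' h
    obtain ⟨k', hk'⟩ : ∃ k', k = k' + 1 := ⟨k - 1, by omega⟩
    set t : ℕ := m * k' with htdef
    have h3 : m + t = m * k := by rw [hk', htdef]; ring
    have h4 : L (m * k) = L 0 := by
      have := hperiodkq m 0
      have e : (0:ℕ) + m * k = m * k := by omega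
      rw [e] at this
      exact this
    have h2 : L (m + t) = L (m' + t) := hshiftN t m m' h
    have h5 : L (m' + t) = L 0 := by rw [← h2, h3, h4]
    have h6 : (m' + t) % r = 0 := hdown _ h5
    have h7 : (m + t) % r = 0 := by rw [h3]; exact hdown _ h4
    have hmm : (m + t) % r = (m' + t) % r := by rw [h6, h7]
    exact Nat.ModEq.add_right_cancel' t hmm
  have hrk : r ∣ k := by
    refine Nat.dvd_of_mod_eq_zero (hdown k ?_)
    simpa using hperiodk 0
  refine ⟨fun i _ => goalA i, fun i _ => goalB i, goalC, r, hr0, hrk, L, ?_, ?_, ?_, ?_, ?_, ?_,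
    ?_, ?_, ?_, ?_, ?_⟩
  · -- components
    ext C
    constructor
    · rintro ⟨z, hzF, rfl⟩
      have hzF' := hzF
      rw [hFeq] at hzF'
      obtain ⟨m, hm⟩ := Set.mem_iUnion.1 hzF'
      refine ⟨m % r, Nat.mod_lt m hr0, ?_⟩
      rw [hsame m z hm]
      exact hmodeq m (m % r) (Nat.mod_mod_of_dvd m (dvd_refl r)).symm
    · rintro ⟨j, hj, rfl⟩
      exact ⟨y j, hyF j, rfl⟩
  · -- distinctness
    intro j hj j' hj' hne heq
    have := hmod j j' heq
    rw [Nat.mod_eq_of_lt hj, Nat.mod_eq_of_lt hj'] at this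
    exact hne this
  · -- K 0 ⊆ L 0
    refine Set.iUnion_subset fun j => ?_
    have h1 : (f^[n₀ + j * k]) '' E ⊆ L (j * k) := hLP (j * k)
    have h2 : L (j * k) = L 0 := by
      have := hperiodkq j 0
      have e : (0:ℕ) + j * k = j * k := by omega
      rw [e] at this
      exact this
    rw [← h2]
    exact h1
  · -- P 0 ⊆ L 0
    have := hLP 0
    rwa [hEeq (n₀ + 0) n₀ (by omega)] at this
  · -- f '' L j = L (j+1) for j + 1 < r
    intro j hjr
    refine Set.Subset.antisymm (himgsub j) ?_
    intro x hx
    have hxF : x ∈ F := hLF (j + 1) hx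
    rw [hFeq] at hxF
    obtain ⟨m, hm⟩ := Set.mem_iUnion.1 hxF
    have hLm : L m = L (j + 1) := by rw [← hsame m x hm, hmemL (j + 1) x hx]
    have hmr : m % r = j + 1 := by
      have := hmod _ _ hLm
      rwa [Nat.mod_eq_of_lt hjr] at this
    have hmpos : 0 < m := by
      rcases Nat.eq_zero_or_pos m with h | h
      · exfalso; rw [h, Nat.zero_mod] at hmr; omega
      · exact h
    obtain ⟨m', rfl⟩ : ∃ m', m = m' + 1 := ⟨m - 1, by omega⟩
    have hxim : x ∈ f '' ((f^[n₀ + m']) '' E) := by rw [hPim m']; exact hm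
    obtain ⟨w, hw, rfl⟩ := hxim
    refine Set.mem_image_of_mem f ?_
    have hwL : w ∈ L m' := hLP m' hw
    have hm'j : m' % r = j % r := by
      have hq := Nat.div_add_mod (m' + 1) r
      rw [hmr] at hq
      have hm'eq : m' = j + r * ((m' + 1) / r) := by omega
      rw [hm'eq, Nat.add_mul_mod_self_left]
    have : L m' = L j := hmodeq m' j hm'j
    rw [← this]
    exact hwL
  · -- f '' L (r - 1) ⊆ L 0
    have h1 := himgsub (r - 1)
    have h2 : r - 1 + 1 = r := by omega
    rw [h2, hrL] at h1
    exact h1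
  · -- structure of L j
    intro j hjr
    apply Set.Subset.antisymm
    · intro x hx
      have hxF : x ∈ F := hLF j hx
      rw [hFeq] at hxF
      obtain ⟨m, hm⟩ := Set.mem_iUnion.1 hxF
      have hLm : L m = L j := by rw [← hsame m x hm, hmemL j x hx]
      have hmr : m % r = j := by
        have := hmod _ _ hLm
        rwa [Nat.mod_eq_of_lt hjr] at this
      have hκpos : 0 < k / r := Nat.div_pos (Nat.le_of_dvd hk hrk) hr0
      obtain ⟨t, hmt⟩ : ∃ t, m = j + t * r := by
        refine ⟨m / r, ?_⟩
        have h1 := Nat.div_add_mod m r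
        have h2 : r * (m / r) = (m / r) * r := Nat.mul_comm r (m / r)
        omega
      obtain ⟨q, ℓ, hℓlt, htq⟩ : ∃ q ℓ, ℓ < k / r ∧ t = q * (k / r) + ℓ := by
        refine ⟨t / (k / r), t % (k / r), Nat.mod_lt t hκpos, ?_⟩
        have h1 := Nat.div_add_mod t (k / r)
        have h2 : (k / r) * (t / (k / r)) = (t / (k / r)) * (k / r) := Nat.mul_comm _ _
        omega
      have hkr : (k / r) * r = k := Nat.div_mul_cancel hrk
      have hm' : m = j + ℓ * r + q * k := by
        calc m = j + t * r := hmt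
        _ = j + (q * (k / r) + ℓ) * r := by rw [← htq]
        _ = j + ℓ * r + q * ((k / r) * r) := by ring
        _ = j + ℓ * r + q * k := by rw [hkr]
      refine Set.mem_iUnion₂.2 ⟨ℓ, Finset.mem_range.2 hℓlt, Set.mem_iUnion.2 ⟨q, ?_⟩⟩
      rw [hEeq (n₀ + (j + ℓ * r) + q * k) (n₀ + m) (by omega)]
      exact hm
    · refine Set.iUnion₂_subset fun ℓ hℓ => Set.iUnion_subset fun m => ?_
      have h1 : (f^[n₀ + (j + ℓ * r) + m * k]) '' E ⊆ L (j + ℓ * r + m * k) := by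
        have := hLP (j + ℓ * r + m * k)
        rwa [hEeq (n₀ + (j + ℓ * r + m * k)) (n₀ + (j + ℓ * r) + m * k) (by omega)] at this
      have e1 : L (j + ℓ * r + m * k) = L (j + ℓ * r) := hperiodkq m (j + ℓ * r)
      have e2 : L (j + ℓ * r) = L j := hperiodrq ℓ j
      rw [e1, e2] at h1
      exact h1
  · -- orbit decomposition
    apply Set.Subset.antisymm
    · intro x hx
      obtain ⟨n, hn⟩ := Set.mem_iUnion.1 hx
      by_cases hn₀' : n < n₀
      · exact Set.mem_union_left _ (Set.mem_iUnion₂.2 ⟨n, Finset.mem_range.2 hn₀', hn⟩)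
      · refine Set.mem_union_right _ ?_
        push_neg at hn₀'
        have hm : x ∈ (f^[n₀ + (n - n₀)]) '' E := by
          rwa [hEeq (n₀ + (n - n₀)) n (by omega)]
        have hxF : x ∈ F := hPF (n - n₀) hm
        refine Set.mem_iUnion₂.2 ⟨(n - n₀) % r, Finset.mem_range.2 (Nat.mod_lt _ hr0), ?_⟩
        have h1 : connectedComponentIn F x = L (n - n₀) := hsame (n - n₀) x hm
        have h2 : L (n - n₀) = L ((n - n₀) % r) :=
          hmodeq _ _ (Nat.mod_mod_of_dvd _ (dvd_refl r)).symm
        rw [← h2, ← h1]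
        exact mem_connectedComponentIn hxF
    · refine Set.union_subset ?_ ?_
      · refine Set.iUnion₂_subset fun m _ => ?_
        intro x hx
        exact Set.mem_iUnion.2 ⟨m, hx⟩
      · refine Set.iUnion₂_subset fun j _ => ?_
        refine (hLF j).trans ?_
        rw [hFeq]
        refine Set.iUnion_subset fun m => ?_
        intro x hx
        exact Set.mem_iUnion.2 ⟨n₀ + m, hx⟩
  · -- disjointness of the pre-period pieces
    intro m hm m' hm' hne
    have key : ∀ a b : ℕ, a < b → a < n₀ → Disjoint ((f^[a]) '' E) ((f^[b]) '' E) := by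
      intro a b hab han
      by_contra hcon
      rw [Set.not_disjoint_iff_nonempty_inter] at hcon
      refine Nat.find_min hexQ han ⟨b - a, by omega, ?_⟩
      rwa [hEeq (a + (b - a)) b (by omega)]
    rcases lt_or_gt_of_ne hne with h | h
    · exact key m m' h hm
    · exact (key m' m h hm').symm
  · -- disjointness pre-period vs components
    intro m hm j hj
    by_contra hcon
    rw [Set.not_disjoint_iff_nonempty_inter] at hcon
    obtain ⟨x, hx1, hx2⟩ := hcon
    have hxF : x ∈ F := hLF j hx2
    rw [hFeq] at hxF
    obtain ⟨m', hm'⟩ := Set.mem_iUnion.1 hxF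
    refine Nat.find_min hexQ hm ⟨n₀ + m' - m, by omega, ⟨x, hx1, ?_⟩⟩
    rwa [hEeq (m + (n₀ + m' - m)) (n₀ + m') (by omega)]
  · -- disjointness of components
    intro j hj j' hj' hne
    rw [Set.disjoint_left]
    intro x hx hx'
    have h1 := hmemL j x hx
    have h2 := hmemL j' x hx'
    have heq : L j = L j' := by rw [← h1, h2]
    have := hmod j j' heq
    rw [Nat.mod_eq_of_lt hj, Nat.mod_eq_of_lt hj'] at this
    exact hne this
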